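/- Kahn's theorem: If G is a bipartite d-regular simple graph with n vertices (d ≥ 1), then the number of independent sets of G satisfies |I(G)| ≤ (2^{d+1} - 1)^{n/(2d)}. -/

import Mathlib

open Finset
open scoped NNReal

/-- The finite set of all independent sets of a finite graph `G`
(including the empty set): subsets of vertices no two of which are adjacent. -/
def indSets {V : Type*} [Fintype V] [DecidableEq V]
    (G : SimpleGraph V) [DecidableRel G.Adj] : Finset (Finset V) :=
  Finset.univ.filter fun s => ∀ u ∈ s, ∀ v ∈ s, ¬ G.Adj u v

lemma holder_prod {ι X : Type*} (s : Finset ι) (t : Finset X) (f : ι → X → ℝ≥0)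
    (d : ℕ) (hd : s.card = d) (hd1 : 1 ≤ d) :
    ∑ x ∈ t, ∏ i ∈ s, f i x ≤ ∏ i ∈ s, (∑ x ∈ t, f i x ^ d) ^ ((d : ℝ)⁻¹) := by
  have hdR : (d : ℝ) ≠ 0 := by positivity
  have hroot : ∀ y : ℝ≥0, (y ^ (d:ℕ)) ^ ((d:ℝ)⁻¹) = y := by
    intro y
    rw [← NNReal.rpow_natCast y d, ← NNReal.rpow_mul, mul_inv_cancel₀ hdR, NNReal.rpow_one]
  by_cases hz : ∃ i ∈ s, (∑ x ∈ t, f i x ^ d) = 0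
  · obtain ⟨i, his, hi⟩ := hz
    have hix : ∀ x ∈ t, f i x = 0 := by
      intro x hx
      have := (Finset.sum_eq_zero_iff.mp hi) x hx
      exact pow_eq_zero_iff (by omega) |>.mp this
    have : ∑ x ∈ t, ∏ j ∈ s, f j x = 0 := by
      refine Finset.sum_eq_zero fun x hx => Finset.prod_eq_zero his (hix x hx)
    simp [this]
  · push_neg at hz
    set T : ι → ℝ≥0 := fun i => ∑ x ∈ t, f i x ^ d with hT
    have hRpos : ∀ i ∈ s, 0 < (T i) ^ ((d:ℝ)⁻¹) := by
      intro i hi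
      exact NNReal.rpow_pos (pos_iff_ne_zero.mpr (hz i hi))
    have hprodpos : 0 < ∏ i ∈ s, (T i) ^ ((d:ℝ)⁻¹) := Finset.prod_pos hRpos
    rw [← div_le_one hprodpos]
    have key : ∀ x ∈ t, (∏ i ∈ s, f i x) / (∏ i ∈ s, (T i) ^ ((d:ℝ)⁻¹))
        ≤ ∑ i ∈ s, (d : ℝ≥0)⁻¹ * (f i x ^ d / T i) := by
      intro x _
      rw [← Finset.prod_div_distrib]
      have := NNReal.geom_mean_le_arith_mean_weighted s (fun _ => (d : ℝ≥0)⁻¹)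
        (fun i => f i x ^ d / T i) (by
          rw [Finset.sum_const, hd, nsmul_eq_mul]
          exact mul_inv_cancel₀ (by exact_mod_cast (by positivity : (0:ℝ) < d).ne'))
      refine le_trans (le_of_eq ?_) this
      refine Finset.prod_congr rfl fun i hi => ?_
      simp only [NNReal.coe_inv, NNReal.coe_natCast]
      rw [NNReal.div_rpow, hroot]
    calc (∑ x ∈ t, ∏ i ∈ s, f i x) / (∏ i ∈ s, (T i) ^ ((d:ℝ)⁻¹))
        = ∑ x ∈ t, (∏ i ∈ s, f i x) / (∏ i ∈ s, (T i) ^ ((d:ℝ)⁻¹)) := by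
          rw [Finset.sum_div]
      _ ≤ ∑ x ∈ t, ∑ i ∈ s, (d : ℝ≥0)⁻¹ * (f i x ^ d / T i) := Finset.sum_le_sum key
      _ = ∑ i ∈ s, (d : ℝ≥0)⁻¹ * ((∑ x ∈ t, f i x ^ d) / T i) := by
          rw [Finset.sum_comm]
          refine Finset.sum_congr rfl fun i _ => ?_
          rw [← Finset.mul_sum, ← Finset.sum_div]
      _ = ∑ i ∈ s, (d : ℝ≥0)⁻¹ := by
          refine Finset.sum_congr rfl fun i hi => ?_
          rw [hT]
          rw [div_self (hz i hi), mul_one]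
      _ = 1 := by
          rw [Finset.sum_const, hd, nsmul_eq_mul]
          exact mul_inv_cancel₀ (by exact_mod_cast (by positivity : (0:ℝ) < d).ne')

lemma finner {α ι : Type*} [DecidableEq α] [DecidableEq ι] (s : Finset ι) (d : ℕ) (hd1 : 1 ≤ d)
    (F : Finset α) (N : ι → Finset α) (g : ι → Finset α → ℝ≥0)
    (hdep : ∀ i ∈ s, ∀ T ⊆ F, g i T = g i (T ∩ N i))
    (hcov : ∀ a ∈ F, (s.filter fun i => a ∈ N i).card = d) :
    (∑ S ∈ F.powerset, ∏ i ∈ s, g i S) ^ d ≤ ∏ i ∈ s, ∑ T ∈ (N i).powerset, (g i T) ^ d := by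
  have hdR : (d : ℝ) ≠ 0 := by positivity
  have hpow : ∀ y : ℝ≥0, (y ^ ((d:ℝ)⁻¹)) ^ (d:ℕ) = y := by
    intro y
    rw [← NNReal.rpow_natCast (y ^ ((d:ℝ)⁻¹)) d, ← NNReal.rpow_mul, inv_mul_cancel₀ hdR,
      NNReal.rpow_one]
  induction F using Finset.induction_on generalizing N g with
  | empty =>
    rw [Finset.powerset_empty, Finset.sum_singleton, ← Finset.prod_pow]
    refine Finset.prod_le_prod' fun i hi => ?_
    exact Finset.single_le_sum (f := fun T => (g i T) ^ d) (fun _ _ => zero_le) (Finset.empty_mem_powerset _)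
  | @insert u F' hu ih =>
    set h : ι → Finset α → ℝ≥0 := fun i T =>
      if u ∈ N i then ((g i T) ^ d + (g i (insert u T)) ^ d) ^ ((d:ℝ)⁻¹) else g i T with hh
    set N' : ι → Finset α := fun i => (N i).erase u with hN'
    have hsu : (s.filter fun i => u ∈ N i).card = d := hcov u (Finset.mem_insert_self u F')
    -- step 1: the sum over powerset of insert
    have hstep : ∑ S ∈ (insert u F').powerset, ∏ i ∈ s, g i S
        ≤ ∑ S ∈ F'.powerset, ∏ i ∈ s, h i S := by
      rw [Finset.sum_powerset_insert hu, ← Finset.sum_add_distrib]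
      refine Finset.sum_le_sum fun S hS => ?_
      have hSF' : S ⊆ F' := Finset.mem_powerset.mp hS
      have huS : u ∉ S := fun hc => hu (hSF' hc)
      -- split products over filter
      rw [← Finset.prod_filter_mul_prod_filter_not s (fun i => u ∈ N i) (g · S),
          ← Finset.prod_filter_mul_prod_filter_not s (fun i => u ∈ N i) (g · (insert u S)),
          ← Finset.prod_filter_mul_prod_filter_not s (fun i => u ∈ N i) (h · S)]
      have heq2 : ∀ i ∈ s.filter (fun i => ¬ u ∈ N i), g i (insert u S) = g i S := by
        intro i hi
        obtain ⟨his, hiu⟩ := Finset.mem_filter.mp hi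
        have h1 := hdep i his (insert u S) (Finset.insert_subset_insert u hSF')
        have h2 := hdep i his S (hSF'.trans (Finset.subset_insert u F'))
        rw [h1, h2, Finset.insert_inter_of_notMem hiu]
      rw [Finset.prod_congr rfl heq2]
      have heq3 : ∀ i ∈ s.filter (fun i => ¬ u ∈ N i), h i S = g i S := by
        intro i hi
        obtain ⟨_, hiu⟩ := Finset.mem_filter.mp hi
        simp only [hh, if_neg hiu]
      rw [Finset.prod_congr rfl heq3, ← add_mul]
      refine mul_le_mul_of_nonneg_right ?_ zero_le
      -- Hölder on the two points S and insert u S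
      have hne : S ≠ insert u S := by
        intro hc
        exact huS (hc ▸ Finset.mem_insert_self u S)
      have := holder_prod (s.filter fun i => u ∈ N i) ({S, insert u S} : Finset (Finset α))
        (fun i T => g i T) d hsu hd1
      rw [Finset.sum_pair hne] at this
      refine this.trans (le_of_eq ?_)
      refine Finset.prod_congr rfl fun i hi => ?_
      obtain ⟨_, hiu⟩ := Finset.mem_filter.mp hi
      rw [Finset.sum_pair hne]
      simp only [hh, if_pos hiu]
    -- step 2: apply induction hypothesis to h and N'
    have hdep' : ∀ i ∈ s, ∀ T ⊆ F', h i T = h i (T ∩ N' i) := by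
      intro i his T hTF'
      have huT : u ∉ T := fun hc => hu (hTF' hc)
      have hTN : T ∩ N' i = T ∩ N i := by
        ext a
        simp only [hN', Finset.mem_inter, Finset.mem_erase]
        exact ⟨fun ⟨ha, _, hn⟩ => ⟨ha, hn⟩, fun ⟨ha, hn⟩ => ⟨ha, fun hc => huT (hc ▸ ha), hn⟩⟩
      have hTF : T ⊆ insert u F' := hTF'.trans (Finset.subset_insert u F')
      have hTNF : T ∩ N i ⊆ insert u F' := (Finset.inter_subset_left).trans hTF
      by_cases hiu : u ∈ N i
      · have e0 : g i T = g i (T ∩ N' i) := by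
          rw [hdep i his T hTF, hTN,
            hdep i his (T ∩ N i) hTNF, Finset.inter_assoc, Finset.inter_self]
        have e1 : (insert u T) ∩ N i = insert u (T ∩ N i) := by
          rw [Finset.insert_inter_of_mem hiu]
        have e2 : g i (insert u T) = g i (insert u (T ∩ N' i)) := by
          rw [hdep i his (insert u T) (Finset.insert_subset_insert u hTF'), e1, hTN,
            hdep i his (insert u (T ∩ N i))
              (Finset.insert_subset (Finset.mem_insert_self u F') hTNF)]
        simp only [hh, if_pos hiu]
        rw [e0, e2]
      · simp only [hh, if_neg hiu]
        rw [hdep i his T hTF, hTN,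
          hdep i his (T ∩ N i) hTNF, Finset.inter_assoc, Finset.inter_self]
    have hcov' : ∀ a ∈ F', (s.filter fun i => a ∈ N' i).card = d := by
      intro a ha
      have hau : a ≠ u := fun hc => hu (hc ▸ ha)
      have : (s.filter fun i => a ∈ N' i) = s.filter fun i => a ∈ N i := by
        refine Finset.filter_congr fun i _ => ?_
        simp [hN', Finset.mem_erase, hau]
      rw [this]
      exact hcov a (Finset.mem_insert_of_mem ha)
    have hih := ih N' h hdep' hcov'
    -- step 3: RHS equality
    have hrhs : ∀ i ∈ s, ∑ T ∈ (N' i).powerset, (h i T) ^ d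
        = ∑ T ∈ (N i).powerset, (g i T) ^ d := by
      intro i _
      by_cases hiu : u ∈ N i
      · have : N i = insert u ((N i).erase u) := (Finset.insert_erase hiu).symm
        conv_rhs => rw [this]
        rw [Finset.sum_powerset_insert (Finset.notMem_erase u (N i)), ← Finset.sum_add_distrib]
        refine Finset.sum_congr rfl fun T _ => ?_
        simp only [hh, if_pos hiu, hN']
        rw [hpow]
      · have : N' i = N i := Finset.erase_eq_of_notMem hiu
        rw [this]
        refine Finset.sum_congr rfl fun T _ => ?_
        simp only [hh, if_neg hiu]
    calc (∑ S ∈ (insert u F').powerset, ∏ i ∈ s, g i S) ^ d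
        ≤ (∑ S ∈ F'.powerset, ∏ i ∈ s, h i S) ^ d := pow_le_pow_left₀ zero_le hstep d
      _ ≤ ∏ i ∈ s, ∑ T ∈ (N' i).powerset, (h i T) ^ d := hih
      _ = ∏ i ∈ s, ∑ T ∈ (N i).powerset, (g i T) ^ d := Finset.prod_congr rfl hrhs

lemma count_indSets {V : Type*} [Fintype V] [DecidableEq V]
    (G : SimpleGraph V) [DecidableRel G.Adj] (P : V → Prop) [DecidablePred P]
    (hcross : ∀ u v, G.Adj u v → (P u ↔ ¬ P v)) :
    (indSets G).card = ∑ S ∈ (Finset.univ.filter fun v => P v).powerset,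
      2 ^ (((Finset.univ.filter fun v => ¬ P v).filter
        fun v => Disjoint S (G.neighborFinset v)).card) := by
  set A := Finset.univ.filter fun v => P v with hA
  set B := Finset.univ.filter fun v => ¬ P v with hB
  have hmemA : ∀ v, v ∈ A ↔ P v := by intro v; simp [hA]
  have hmemB : ∀ v, v ∈ B ↔ ¬ P v := by intro v; simp [hB]
  have hind : ∀ I, I ∈ indSets G ↔ ∀ u ∈ I, ∀ v ∈ I, ¬ G.Adj u v := by
    intro I; simp [indSets]
  rw [Finset.card_eq_sum_card_fiberwise
    (f := fun I => I ∩ A) (t := A.powerset)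
    (fun I _ => Finset.mem_powerset.mpr Finset.inter_subset_right)]
  refine Finset.sum_congr rfl fun S hS => ?_
  have hSA : S ⊆ A := Finset.mem_powerset.mp hS
  rw [← Finset.card_powerset]
  refine Finset.card_bij' (fun I _ => I ∩ B)
    (fun T _ => S ∪ T) ?_ ?_ ?_ ?_
  · -- maps into powerset of B_S
    intro I hI
    obtain ⟨hIind, hIA⟩ := Finset.mem_filter.mp hI
    rw [hind] at hIind
    refine Finset.mem_powerset.mpr fun v hv => ?_
    obtain ⟨hvI, hvB⟩ := Finset.mem_inter.mp hv
    refine Finset.mem_filter.mpr ⟨hvB, Finset.disjoint_left.mpr fun u huS hun => ?_⟩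
    have huI : u ∈ I := by
      have : u ∈ I ∩ A := hIA ▸ hSA.trans (le_refl A) |> fun _ => hIA ▸ huS
      exact (Finset.mem_inter.mp this).1
    exact hIind u huI v hvI ((SimpleGraph.mem_neighborFinset G v u).mp hun).symm
  · -- reverse maps into fiber
    intro T hT
    have hTB : T ⊆ B.filter fun v => Disjoint S (G.neighborFinset v) :=
      Finset.mem_powerset.mp hT
    refine Finset.mem_filter.mpr ⟨?_, ?_⟩
    · rw [hind]
      intro u hu v hv hadj
      rcases Finset.mem_union.mp hu with huS | huT <;>
        rcases Finset.mem_union.mp hv with hvS | hvT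
      · exact ((hcross u v hadj).mp ((hmemA u).mp (hSA huS))) ((hmemA v).mp (hSA hvS))
      · have := Finset.mem_filter.mp (hTB hvT)
        exact Finset.disjoint_left.mp this.2 huS
          ((SimpleGraph.mem_neighborFinset G v u).mpr hadj.symm)
      · have := Finset.mem_filter.mp (hTB huT)
        exact Finset.disjoint_left.mp this.2 hvS
          ((SimpleGraph.mem_neighborFinset G u v).mpr hadj)
      · have hu' := (hmemB u).mp (Finset.mem_filter.mp (hTB huT)).1
        have hv' := (hmemB v).mp (Finset.mem_filter.mp (hTB hvT)).1
        exact hu' ((hcross u v hadj).mpr hv')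
    · -- (S ∪ T) ∩ A = S
      ext a
      simp only [Finset.mem_inter, Finset.mem_union]
      constructor
      · rintro ⟨hST, haA⟩
        rcases hST with h | h
        · exact h
        · exact absurd ((hmemA a).mp haA) ((hmemB a).mp (Finset.mem_filter.mp (hTB h)).1)
      · intro haS
        exact ⟨Or.inl haS, hSA haS⟩
  · -- left inverse : S ∪ (I ∩ B) = I
    intro I hI
    obtain ⟨_, hIA⟩ := Finset.mem_filter.mp hI
    ext a
    simp only [Finset.mem_union, Finset.mem_inter]
    constructor
    · rintro (h | ⟨h, _⟩)
      · exact (Finset.mem_inter.mp (hIA ▸ h : a ∈ I ∩ A)).1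
      · exact h
    · intro haI
      by_cases hPa : P a
      · exact Or.inl (hIA ▸ Finset.mem_inter.mpr ⟨haI, (hmemA a).mpr hPa⟩)
      · exact Or.inr ⟨haI, (hmemB a).mpr hPa⟩
  · -- right inverse : (S ∪ T) ∩ B = T
    intro T hT
    have hTB : T ⊆ B.filter fun v => Disjoint S (G.neighborFinset v) :=
      Finset.mem_powerset.mp hT
    ext a
    simp only [Finset.mem_inter, Finset.mem_union]
    constructor
    · rintro ⟨hST, haB⟩
      rcases hST with h | h
      · exact absurd ((hmemA a).mp (hSA h)) ((hmemB a).mp haB)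
      · exact h
    · intro haT
      exact ⟨Or.inr haT, (Finset.mem_filter.mp (hTB haT)).1⟩

lemma side_bound {V : Type*} [Fintype V] [DecidableEq V]
    (G : SimpleGraph V) [DecidableRel G.Adj] (d : ℕ) (hd : 1 ≤ d)
    (P : V → Prop) [DecidablePred P] (hreg : G.IsRegularOfDegree d)
    (hcross : ∀ u v, G.Adj u v → (P u ↔ ¬ P v)) :
    ((indSets G).card : ℝ≥0) ^ d ≤
      ((2 : ℝ≥0) ^ (d + 1) - 1) ^ (Finset.univ.filter fun v => ¬ P v).card := by
  classical
  set A := Finset.univ.filter fun v => P v with hA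
  set B := Finset.univ.filter fun v => ¬ P v with hB
  have hmemA : ∀ v, v ∈ A ↔ P v := by intro v; simp [hA]
  have hmemB : ∀ v, v ∈ B ↔ ¬ P v := by intro v; simp [hB]
  have hnbB : ∀ v ∈ B, G.neighborFinset v ⊆ A := by
    intro v hv a ha
    rw [SimpleGraph.mem_neighborFinset] at ha
    exact (hmemA a).mpr (not_not.mp (fun hc => ((hmemB v).mp hv) ((hcross v a ha).mpr hc)))
  have hnbA : ∀ a ∈ A, G.neighborFinset a ⊆ B := by
    intro a ha v hv
    rw [SimpleGraph.mem_neighborFinset] at hv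
    exact (hmemB v).mpr ((hcross a v hv).mp ((hmemA a).mp ha))
  set g : V → Finset V → ℝ≥0 :=
    fun v S => if Disjoint S (G.neighborFinset v) then 2 else 1 with hg
  set N : V → Finset V := fun v => G.neighborFinset v ∩ A with hN
  have hone : (1 : ℝ≥0) ≤ 2 ^ d := one_le_pow₀ (by norm_num)
  have hdep : ∀ v ∈ B, ∀ T ⊆ A, g v T = g v (T ∩ N v) := by
    intro v _ T hTA
    have hiff : Disjoint T (G.neighborFinset v) ↔
        Disjoint (T ∩ N v) (G.neighborFinset v) := by
      rw [Finset.disjoint_iff_inter_eq_empty, Finset.disjoint_iff_inter_eq_empty]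
      have : (T ∩ N v) ∩ G.neighborFinset v = T ∩ G.neighborFinset v := by
        ext a
        simp only [hN, Finset.mem_inter]
        constructor
        · rintro ⟨⟨h1, _, _⟩, h4⟩; exact ⟨h1, h4⟩
        · rintro ⟨h1, h2⟩; exact ⟨⟨h1, h2, hTA h1⟩, h2⟩
      rw [this]
    simp only [hg]
    exact if_congr hiff rfl rfl
  have hcov : ∀ a ∈ A, (B.filter fun v => a ∈ N v).card = d := by
    intro a ha
    have : (B.filter fun v => a ∈ N v) = G.neighborFinset a := by
      ext v
      simp only [Finset.mem_filter, hN, Finset.mem_inter, SimpleGraph.mem_neighborFinset]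
      constructor
      · rintro ⟨_, hadj, _⟩; exact hadj.symm
      · intro hadj
        refine ⟨hnbA a ha ((SimpleGraph.mem_neighborFinset G a v).mpr hadj), hadj.symm, ha⟩
    rw [this]
    exact hreg a
  have key := finner B d hd A N g hdep hcov
  -- LHS equality
  have hlhs : (∑ S ∈ A.powerset, ∏ v ∈ B, g v S) = ((indSets G).card : ℝ≥0) := by
    rw [count_indSets G P hcross]
    push_cast
    refine Finset.sum_congr rfl fun S _ => ?_
    simp only [hg]
    rw [Finset.prod_ite, Finset.prod_const, Finset.prod_const_one, mul_one]
  -- RHS equality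
  have hrhs : ∀ v ∈ B, (∑ T ∈ (N v).powerset, (g v T) ^ d) = 2 ^ (d + 1) - 1 := by
    intro v hv
    have hNv : N v = G.neighborFinset v := by
      simp only [hN]
      exact Finset.inter_eq_left.mpr (hnbB v hv)
    have hcard : (G.neighborFinset v).card = d := hreg v
    have hterm : ∀ T ∈ (G.neighborFinset v).powerset,
        (g v T) ^ d = 1 + (if T = (∅ : Finset V) then (2:ℝ≥0)^d - 1 else 0) := by
      intro T hT
      have hTn : T ⊆ G.neighborFinset v := Finset.mem_powerset.mp hT
      simp only [hg]
      by_cases hTe : T = ∅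
      · subst hTe
        rw [if_pos (Finset.disjoint_left.mpr fun a ha => absurd ha (Finset.notMem_empty a)),
          if_pos rfl, add_tsub_cancel_of_le hone]
      · have : ¬ Disjoint T (G.neighborFinset v) := by
          intro hdisj
          obtain ⟨a, haT⟩ := Finset.nonempty_of_ne_empty hTe
          exact Finset.disjoint_left.mp hdisj haT (hTn haT)
        rw [if_neg this, if_neg hTe, one_pow, add_zero]
    rw [hNv, Finset.sum_congr rfl hterm, Finset.sum_add_distrib, Finset.sum_const,
      Finset.sum_ite_eq' _ (∅ : Finset V) (fun _ => (2:ℝ≥0)^d - 1),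
      if_pos (Finset.empty_mem_powerset _), Finset.card_powerset, hcard, nsmul_eq_mul,
      mul_one, pow_succ, mul_two, add_tsub_assoc_of_le hone]
    norm_cast
  calc ((indSets G).card : ℝ≥0) ^ d
      = (∑ S ∈ A.powerset, ∏ v ∈ B, g v S) ^ d := by rw [hlhs]
    _ ≤ ∏ v ∈ B, ∑ T ∈ (N v).powerset, (g v T) ^ d := key
    _ = ∏ v ∈ B, ((2:ℝ≥0) ^ (d+1) - 1) := Finset.prod_congr rfl hrhs
    _ = ((2:ℝ≥0) ^ (d+1) - 1) ^ B.card := Finset.prod_const _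

/-- **Kahn's theorem.** If `G` is a bipartite `d`-regular simple graph (`d ≥ 1`) with `n`
vertices, then the number of its independent sets is at most `(2^(d+1) - 1)^(n/(2d))`. -/
theorem kahn_independent_sets {V : Type*} [Fintype V] [DecidableEq V]
    (G : SimpleGraph V) [DecidableRel G.Adj] (d : ℕ) (hd : 1 ≤ d)
    (hbip : G.Colorable 2) (hreg : G.IsRegularOfDegree d) :
    ((indSets G).card : ℝ) ≤
      ((2 : ℝ) ^ (d + 1) - 1) ^ ((Fintype.card V : ℝ) / (2 * d)) := by
  classical
  obtain ⟨C⟩ := hbip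
  set P : V → Prop := fun v => C v = 0 with hP
  have hdecP : DecidablePred P := fun v => by unfold P; infer_instance
  have hcross : ∀ u v, G.Adj u v → (P u ↔ ¬ P v) := by
    intro u v hadj
    have hne : C u ≠ C v := C.valid hadj
    simp only [hP]
    constructor
    · intro h0 hc; exact hne (h0.trans hc.symm)
    · intro hnv
      revert hne hnv
      generalize C u = a; generalize C v = b
      revert a b; decide
  have hcross' : ∀ u v, G.Adj u v → ((¬ P u) ↔ ¬ ¬ P v) := by
    intro u v hadj
    rw [not_not]
    exact not_iff_comm.mp (iff_comm.mp (hcross u v hadj))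
  have h1 := side_bound G d hd P hreg hcross
  have h2 := side_bound G d hd (fun v => ¬ P v) hreg hcross'
  set c : ℝ≥0 := ((indSets G).card : ℝ≥0) with hc
  set M : ℝ≥0 := (2 : ℝ≥0) ^ (d + 1) - 1 with hM
  have hcardsum : (Finset.univ.filter fun v => ¬ P v).card
      + (Finset.univ.filter fun v => ¬ ¬ P v).card = Fintype.card V := by
    have : (Finset.univ.filter fun v => ¬ ¬ P v) = Finset.univ.filter P := by
      refine Finset.filter_congr fun v _ => by tauto
    rw [this, add_comm]
    exact Finset.card_filter_add_card_filter_not _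
  have hmain : c ^ (2 * d) ≤ M ^ (Fintype.card V) := by
    calc c ^ (2 * d) = c ^ d * c ^ d := by rw [two_mul, pow_add]
      _ ≤ M ^ (Finset.univ.filter fun v => ¬ P v).card
          * M ^ (Finset.univ.filter fun v => ¬ ¬ P v).card := mul_le_mul' h1 h2
      _ = M ^ (Fintype.card V) := by rw [← pow_add, hcardsum]
  -- pass to ℝ
  have hMR : (M : ℝ) = (2 : ℝ) ^ (d + 1) - 1 := by
    rw [hM, NNReal.coe_sub (one_le_pow₀ (by norm_num)), NNReal.coe_pow]
    norm_num
  have hmainR : ((c : ℝ)) ^ (2 * d) ≤ ((2 : ℝ) ^ (d + 1) - 1) ^ (Fintype.card V) := by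
    rw [← hMR, ← NNReal.coe_pow, ← NNReal.coe_pow]
    exact_mod_cast hmain
  have h2d : ((2 * d : ℕ) : ℝ) ≠ 0 := by positivity
  have hMR0 : (0:ℝ) ≤ (2 : ℝ) ^ (d + 1) - 1 := by
    have : (1:ℝ) ≤ 2 ^ (d+1) := one_le_pow₀ (by norm_num)
    linarith
  have hcR : ((indSets G).card : ℝ) = (c : ℝ) := by rw [hc]; norm_num
  rw [hcR]
  calc (c : ℝ) = ((c : ℝ) ^ ((2 * d : ℕ))) ^ (((2 * d : ℕ) : ℝ))⁻¹ := by
        rw [← Real.rpow_natCast (c : ℝ) (2 * d), ← Real.rpow_mul (by positivity),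
          mul_inv_cancel₀ h2d, Real.rpow_one]
    _ ≤ (((2 : ℝ) ^ (d + 1) - 1) ^ (Fintype.card V)) ^ (((2 * d : ℕ) : ℝ))⁻¹ := by
        refine Real.rpow_le_rpow (by positivity) hmainR (by positivity)
    _ = ((2 : ℝ) ^ (d + 1) - 1) ^ ((Fintype.card V : ℝ) / (2 * d)) := by
        rw [← Real.rpow_natCast ((2 : ℝ) ^ (d + 1) - 1) (Fintype.card V),
          ← Real.rpow_mul hMR0]
        congr 1
        push_cast
        ring
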